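/- Let n ≥ 2, δ > 2 log n, and let a, b ∈ ℝⁿ be strictly decreasing vectors with a₁ − a₂ > δ (in fact a_i − a_j > δ for all i < j) and a₁ − b₁ > δ. Then Boltz(a) − Boltz(b) > δ / (1 + (n − 1) e^{−δ}) ≥ log n; in particular Boltz(a) − Boltz(b) > (log n)² e^{−(a₁ − b₁)}. -/

import Mathlib

open scoped BigOperators Classical
open Matrix

noncomputable section

def softmax {n : ℕ} (a : Fin n → ℝ) : Fin n → ℝ :=
  fun i => Real.exp (a i) / ∑ j, Real.exp (a j)

def boltz {n : ℕ} (a : Fin n → ℝ) : ℝ := ∑ i, a i * softmax a i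

def argmaxSet {n : ℕ} (a : Fin n → ℝ) : Finset (Fin n) :=
  Finset.univ.filter (fun i => ∀ j, a j ≤ a i)

def hardmax {n : ℕ} (a : Fin n → ℝ) : Fin n → ℝ :=
  fun i => if i ∈ argmaxSet a then (1 : ℝ) / (argmaxSet a).card else 0

def softmaxCols {n m : ℕ} (A : Matrix (Fin n) (Fin m) ℝ) : Matrix (Fin n) (Fin m) ℝ :=
  Matrix.of fun i k => softmax (fun j => A j k) i

def hardmaxCols {n m : ℕ} (A : Matrix (Fin n) (Fin m) ℝ) : Matrix (Fin n) (Fin m) ℝ :=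
  Matrix.of fun i k => hardmax (fun j => A j k) i

def attnS {d n s : ℕ} (WO : Matrix (Fin d) (Fin s) ℝ)
    (WV WK WQ : Matrix (Fin s) (Fin d) ℝ) (Z : Matrix (Fin d) (Fin n) ℝ) :
    Matrix (Fin d) (Fin n) ℝ :=
  Z + WO * (WV * Z) * softmaxCols ((WK * Z)ᵀ * (WQ * Z))

def attnH {d n s h : ℕ} (WO : Fin h → Matrix (Fin d) (Fin s) ℝ)
    (WV WK WQ : Fin h → Matrix (Fin s) (Fin d) ℝ) (Z : Matrix (Fin d) (Fin n) ℝ) :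
    Matrix (Fin d) (Fin n) ℝ :=
  Z + ∑ i, WO i * (WV i * Z) * hardmaxCols ((WK i * Z)ᵀ * (WQ i * Z))

def l2norm {d : ℕ} (x : Fin d → ℝ) : ℝ := Real.sqrt (∑ t, (x t) ^ 2)

def TokSep {d n N : ℕ} (rmin rmax δ : ℝ) (X : Fin N → Matrix (Fin d) (Fin n) ℝ) : Prop :=
  (∀ i k, rmin < l2norm (fun t => X i t k)) ∧
  (∀ i k, l2norm (fun t => X i t k) < rmax) ∧
  (∀ i j k l, (fun t => X i t k) ≠ (fun t => X j t l) →
    δ < l2norm (fun t => X i t k - X j t l))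

def vocab {d n : ℕ} (X : Matrix (Fin d) (Fin n) ℝ) : Finset (Fin d → ℝ) :=
  Finset.image (fun k => (fun t => X t k)) Finset.univ

def ContextualMapping {d n N : ℕ} (X : Fin N → Matrix (Fin d) (Fin n) ℝ)
    (q : Matrix (Fin d) (Fin n) ℝ → Matrix (Fin d) (Fin n) ℝ) (r δ : ℝ) : Prop :=
  (∀ i k, l2norm (fun t => q (X i) t k) < r) ∧
  (∀ i j k l, (vocab (X i) ≠ vocab (X j) ∨ (fun t => X i t k) ≠ (fun t => X j t l)) →
    δ < l2norm (fun t => q (X i) t k - q (X j) t l))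

def ffn {d n q : ℕ} (W1 : Matrix (Fin q) (Fin d) ℝ) (W2 : Matrix (Fin d) (Fin q) ℝ)
    (b1 : Fin q → ℝ) (b2 : Fin d → ℝ) (H : Matrix (Fin d) (Fin n) ℝ) :
    Matrix (Fin d) (Fin n) ℝ :=
  Matrix.of fun t k =>
    H t k + W2.mulVec (fun u => max 0 (W1.mulVec (fun t' => H t' k) u + b1 u)) t + b2 t

def logSumExp {n : ℕ} (a : Fin n → ℝ) : ℝ := Real.log (∑ i, Real.exp (a i))

def entS {n : ℕ} (p : Fin n → ℝ) : ℝ := -∑ i, p i * Real.log (p i)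

lemma aux_star (x δ t : ℝ) (hx : 0 ≤ x) (hδx : 1 + x ≤ δ) (ht : δ ≤ t) :
    t * (1 + x) * Real.exp (-t) ≤ δ * Real.exp (-δ) + δ * x * Real.exp (-t) := by
  have hw : Real.exp (-t) = Real.exp (-δ) * Real.exp (δ - t) := by
    rw [← Real.exp_add]; ring_nf
  set w := Real.exp (δ - t) with hwdef
  have hw0 : 0 < w := Real.exp_pos _
  have h2 : Real.exp (t - δ) * w = 1 := by
    rw [hwdef, ← Real.exp_add]; simp
  have hkey : (1 + (t - δ)) * w ≤ 1 := by
    have h3 := Real.add_one_le_exp (t - δ)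
    nlinarith [hw0]
  have hw1 : w ≤ 1 := by nlinarith [hkey, hw0]
  have h1 : 0 ≤ (1 - w) * (δ - (1 + x)) := by
    apply mul_nonneg <;> linarith
  have hkx : 0 ≤ x * (1 - (1 + (t - δ)) * w) := by
    apply mul_nonneg hx; linarith
  have hmain : t * (1 + x) * w ≤ δ + δ * x * w := by nlinarith [hkey, h1, hkx]
  have hvpos : 0 < Real.exp (-δ) := Real.exp_pos _
  rw [hw]
  nlinarith [mul_le_mul_of_nonneg_left hmain hvpos.le]

theorem statement16 (n : ℕ) (hn : 2 ≤ n) (δ : ℝ) (hδ : 2 * Real.log n < δ)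
    (a b : Fin n → ℝ)
    (hagap : ∀ i j : Fin n, i < j → δ < a i - a j)
    (hbdec : ∀ i j : Fin n, i < j → b j < b i)
    (hab : δ < a ⟨0, by omega⟩ - b ⟨0, by omega⟩) :
    δ / (1 + ((n : ℝ) - 1) * Real.exp (-δ)) < boltz a - boltz b ∧
      Real.log n ≤ δ / (1 + ((n : ℝ) - 1) * Real.exp (-δ)) ∧
      (Real.log n) ^ 2 * Real.exp (-(a ⟨0, by omega⟩ - b ⟨0, by omega⟩)) <
        boltz a - boltz b := by
  have hnpos : 0 < n := by omega
  set i0 : Fin n := ⟨0, hnpos⟩ with hi0def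
  have hN : (2 : ℝ) ≤ (n : ℝ) := by exact_mod_cast hn
  have hNpos : (0 : ℝ) < (n : ℝ) := by linarith
  have hn2 : (0 : ℝ) < (n : ℝ) ^ 2 := by positivity
  have hlogn : 0 < Real.log n := Real.log_pos (by linarith)
  have hab' : δ < a i0 - b i0 := hab
  set x : ℝ := ((n : ℝ) - 1) * Real.exp (-δ) with hxdef
  have hxpos : 0 < x := mul_pos (by linarith) (Real.exp_pos _)
  -- exp(-δ) < 1/n²
  have hexp2 : Real.exp (2 * Real.log n) = (n : ℝ) ^ 2 := by
    rw [two_mul, Real.exp_add, Real.exp_log hNpos]; ring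
  have hexpδlt : Real.exp (-δ) < ((n : ℝ) ^ 2)⁻¹ := by
    have h1 : Real.exp (-δ) < Real.exp (-(2 * Real.log n)) :=
      Real.exp_lt_exp.2 (by linarith)
    have h2 : Real.exp (-(2 * Real.log n)) = ((n : ℝ) ^ 2)⁻¹ := by
      rw [Real.exp_neg, hexp2]
    linarith
  -- x ≤ 1/4
  have hx14 : x ≤ 1 / 4 := by
    have h1 : x < ((n : ℝ) - 1) * ((n : ℝ) ^ 2)⁻¹ :=
      mul_lt_mul_of_pos_left hexpδlt (by linarith)
    have h2 : ((n : ℝ) - 1) * ((n : ℝ) ^ 2)⁻¹ ≤ 1 / 4 := by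
      nlinarith [mul_nonneg (inv_nonneg.2 hn2.le) (sq_nonneg ((n : ℝ) - 2)),
        mul_inv_cancel₀ (ne_of_gt hn2)]
    linarith
  -- 1 + x ≤ δ
  have hlog2n : Real.log 2 ≤ Real.log n := Real.log_le_log (by norm_num) hN
  have h1x : 1 + x ≤ δ := by
    have := Real.log_two_gt_d9
    linarith
  have h1xpos : (0 : ℝ) < 1 + x := by linarith
  -- boltz b ≤ b i0
  have hbmax : ∀ i, b i ≤ b i0 := by
    intro i
    rcases Nat.eq_zero_or_pos i.val with h | h
    · have : i = i0 := Fin.ext h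
      rw [this]
    · exact (hbdec i0 i (by simp [Fin.lt_def, hi0def, h])).le
  have hSb : 0 < ∑ j, Real.exp (b j) :=
    Finset.sum_pos (fun j _ => Real.exp_pos _) ⟨i0, Finset.mem_univ i0⟩
  have hsoftb_nonneg : ∀ i, 0 ≤ softmax b i := fun i =>
    div_nonneg (Real.exp_pos _).le hSb.le
  have hsumsoftb : ∑ i, softmax b i = 1 := by
    unfold softmax
    rw [← Finset.sum_div, div_self hSb.ne']
  have hBb : boltz b ≤ b i0 := by
    calc boltz b ≤ ∑ i, b i0 * softmax b i :=
          Finset.sum_le_sum fun i _ =>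
            mul_le_mul_of_nonneg_right (hbmax i) (hsoftb_nonneg i)
      _ = b i0 * ∑ i, softmax b i := by rw [Finset.mul_sum]
      _ = b i0 := by rw [hsumsoftb, mul_one]
  -- boltz a lower bound
  have hSa : 0 < ∑ j, Real.exp (a j) :=
    Finset.sum_pos (fun j _ => Real.exp_pos _) ⟨i0, Finset.mem_univ i0⟩
  set S : ℝ := ∑ j, Real.exp (a j) with hSdef
  set T : ℝ := ∑ i, (a i0 - a i) * Real.exp (a i) with hTdef
  have hkey : (1 + x) * T ≤ δ * x * S := by
    have hsum_eq : ∑ i ∈ Finset.univ.erase i0, ((a i0 - a i) * (1 + x) * Real.exp (a i))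
        = (1 + x) * T := by
      rw [hTdef, Finset.mul_sum]
      rw [← Finset.sum_erase (Finset.univ) (a := i0)
        (f := fun i => (1 + x) * ((a i0 - a i) * Real.exp (a i))) (by simp)]
      apply Finset.sum_congr rfl
      intro i _; ring
    have hterm : ∀ i ∈ Finset.univ.erase i0,
        (a i0 - a i) * (1 + x) * Real.exp (a i)
          ≤ δ * Real.exp (-δ) * Real.exp (a i0) + δ * x * Real.exp (a i) := by
      intro i hi
      have hine : i ≠ i0 := Finset.ne_of_mem_erase hi
      have hlt : i0 < i := by
        have : i.val ≠ 0 := fun h => hine (Fin.ext h)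
        simp [Fin.lt_def, hi0def]; omega
      have ht : δ ≤ a i0 - a i := (hagap i0 i hlt).le
      have hstar := aux_star x δ (a i0 - a i) hxpos.le h1x ht
      have hexpi : Real.exp (-(a i0 - a i)) * Real.exp (a i0) = Real.exp (a i) := by
        rw [← Real.exp_add]; ring_nf
      have hmul := mul_le_mul_of_nonneg_right hstar (Real.exp_pos (a i0)).le
      have hrw1 : (a i0 - a i) * (1 + x) * Real.exp (a i)
          = (a i0 - a i) * (1 + x) * Real.exp (-(a i0 - a i)) * Real.exp (a i0) := by
        rw [← hexpi]; ring
      have hrw2 : (δ * Real.exp (-δ) + δ * x * Real.exp (-(a i0 - a i))) * Real.exp (a i0)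
          = δ * Real.exp (-δ) * Real.exp (a i0) + δ * x * Real.exp (a i) := by
        rw [← hexpi]; ring
      linarith [hmul, hrw1.le, hrw2.le, hrw1.ge, hrw2.ge]
    have hsum_le := Finset.sum_le_sum hterm
    have hcard : (Finset.univ.erase i0).card = n - 1 := by
      rw [Finset.card_erase_of_mem (Finset.mem_univ i0), Finset.card_univ, Fintype.card_fin]
    have hcast : ((n - 1 : ℕ) : ℝ) = (n : ℝ) - 1 := by
      rw [Nat.cast_sub (by omega)]; norm_num
    have hsum_rhs : ∑ i ∈ Finset.univ.erase i0,
        (δ * Real.exp (-δ) * Real.exp (a i0) + δ * x * Real.exp (a i)) = δ * x * S := by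
      rw [Finset.sum_add_distrib, Finset.sum_const, hcard, ← Finset.mul_sum,
        Finset.sum_erase_eq_sub (Finset.mem_univ i0), nsmul_eq_mul, hcast, ← hSdef, hxdef]
      ring
    rw [hsum_eq, hsum_rhs] at hsum_le
    exact hsum_le
  have hba : boltz a = (∑ i, a i * Real.exp (a i)) / S := by
    unfold boltz softmax
    rw [← hSdef, Finset.sum_div]
    apply Finset.sum_congr rfl
    intro i _; ring
  have hTalt : T = a i0 * S - ∑ i, a i * Real.exp (a i) := by
    rw [hTdef, hSdef, Finset.mul_sum, ← Finset.sum_sub_distrib]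
    apply Finset.sum_congr rfl
    intro i _; ring
  have hdiff : a i0 - boltz a = T / S := by
    rw [hba, hTalt, sub_div, mul_div_assoc, div_self hSa.ne', mul_one]
  have hTS : T / S ≤ δ * x / (1 + x) := by
    rw [div_le_div_iff₀ hSa h1xpos]
    nlinarith [hkey]
  have hBa : a i0 - δ * x / (1 + x) ≤ boltz a := by linarith [hdiff ▸ hTS]
  have hid : δ / (1 + x) + δ * x / (1 + x) = δ := by
    field_simp
  have part1 : δ / (1 + x) < boltz a - boltz b := by
    have h5 : a i0 - boltz a ≤ δ * x / (1 + x) := by rw [hdiff]; exact hTS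
    linarith
  have part2 : Real.log n ≤ δ / (1 + x) := by
    rw [le_div_iff₀ h1xpos]
    have h6 : Real.log n * x ≤ Real.log n * 1 :=
      mul_le_mul_of_nonneg_left (by linarith) hlogn.le
    have h7 : Real.log n * (1 + x) = Real.log n + Real.log n * x := by ring
    linarith
  have part3 : (Real.log n) ^ 2 * Real.exp (-(a i0 - b i0)) < boltz a - boltz b := by
    have hp2 : (0 : ℝ) < (Real.log n) ^ 2 := pow_pos hlogn 2
    have hd1 : Real.exp (-(a i0 - b i0)) < Real.exp (-δ) :=
      Real.exp_lt_exp.2 (by linarith)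
    have hc1 : (Real.log n) ^ 2 * Real.exp (-(a i0 - b i0))
        < (Real.log n) ^ 2 * ((n : ℝ) ^ 2)⁻¹ :=
      mul_lt_mul_of_pos_left (lt_trans hd1 hexpδlt) hp2
    have hlb : Real.log n ≤ (n : ℝ) - 1 := by
      have := Real.log_le_sub_one_of_pos hNpos
      linarith
    have h4 : (Real.log n) ^ 2 ≤ Real.log n * (n : ℝ) ^ 2 := by
      have h5 : Real.log n * Real.log n ≤ Real.log n * ((n : ℝ) - 1) :=
        mul_le_mul_of_nonneg_left hlb hlogn.le
      have h5a : (n : ℝ) ≤ (n : ℝ) ^ 2 := le_self_pow₀ (by linarith) (by norm_num)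
      have h5b : (n : ℝ) - 1 ≤ (n : ℝ) ^ 2 := by linarith
      have h5c : Real.log n * ((n : ℝ) - 1) ≤ Real.log n * ((n : ℝ) ^ 2) :=
        mul_le_mul_of_nonneg_left h5b hlogn.le
      rw [pow_two]; linarith
    have hc2 : (Real.log n) ^ 2 * ((n : ℝ) ^ 2)⁻¹ ≤ Real.log n := by
      calc (Real.log n) ^ 2 * ((n : ℝ) ^ 2)⁻¹
          ≤ (Real.log n * (n : ℝ) ^ 2) * ((n : ℝ) ^ 2)⁻¹ :=
            mul_le_mul_of_nonneg_right h4 (by positivity)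
        _ = Real.log n := by field_simp
    linarith
  exact ⟨part1, part2, part3⟩


end
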